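/- arXiv:2310.11662 — 2 statements merged into one kernel-verified Lean document; each statement's English description precedes it below -/
import Mathlib

section
/- Let X be a finite set, F ⊆ 2^X a down-set, p ∈ [0,1], and λ : 2^X → [0,∞) a function with Σ_{S ⊆ X} λ(S)(1-p)^{|X \ S|} ≤ 1/2 and Σ_{S ⊇ A} λ(S) ≥ 1 for every A ∈ F. Then μ_p(F) ≤ 1/2. -/
open scoped Classical
open Finset

/-- `μ_p(𝓕) = ∑_{S ∈ 𝓕} p^{|S|} (1-p)^{|X \ S|}` for a family `𝓕` of subsets of a finite set. -/
noncomputable def muP {α : Type*} [Fintype α] (p : ℝ) (𝓕 : Finset (Finset α)) : ℝ :=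
  ∑ S ∈ 𝓕, p ^ S.card * (1 - p) ^ (Fintype.card α - S.card)

lemma key_sum {α : Type*} [Fintype α] (p : ℝ) (S : Finset α) :
    ∑ A ∈ S.powerset, p ^ A.card * (1 - p) ^ (Fintype.card α - A.card)
      = (1 - p) ^ (Fintype.card α - S.card) := by
  have hS : S.card ≤ Fintype.card α := S.card_le_univ
  have h1 : ∑ A ∈ S.powerset, p ^ A.card * (1 - p) ^ (Fintype.card α - A.card)
      = (1 - p) ^ (Fintype.card α - S.card) *
        ∑ A ∈ S.powerset, p ^ A.card * (1 - p) ^ (S.card - A.card) := by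
    rw [Finset.mul_sum]
    refine Finset.sum_congr rfl fun A hA => ?_
    have hAS : A ⊆ S := Finset.mem_powerset.mp hA
    have hc : A.card ≤ S.card := Finset.card_le_card hAS
    have : Fintype.card α - A.card = (Fintype.card α - S.card) + (S.card - A.card) := by
      omega
    rw [this, pow_add]; ring
  have h2 : ∑ A ∈ S.powerset, p ^ A.card * (1 - p) ^ (S.card - A.card) = 1 := by
    have hpa := Finset.prod_add (fun _ : α => p) (fun _ : α => 1 - p) S
    simp only [Finset.prod_const, add_sub_cancel] at hpa
    calc ∑ A ∈ S.powerset, p ^ A.card * (1 - p) ^ (S.card - A.card)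
        = ∑ A ∈ S.powerset, p ^ A.card * (1 - p) ^ (S \ A).card := by
          refine Finset.sum_congr rfl fun A hA => ?_
          rw [Finset.card_sdiff_of_subset (Finset.mem_powerset.mp hA)]
      _ = (1 : ℝ) ^ S.card := hpa.symm
      _ = 1 := one_pow _
  rw [h1, h2, mul_one]

theorem mu_le_half_of_fractional_certificate {α : Type*} [Fintype α]
    (𝓕 : Finset (Finset α)) (p : ℝ) (hp : p ∈ Set.Icc (0 : ℝ) 1)
    (hdown : ∀ A ∈ 𝓕, ∀ B ⊆ A, B ∈ 𝓕)
    (lam : Finset α → ℝ) (hlam : ∀ S, 0 ≤ lam S)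
    (hsum : ∑ S : Finset α, lam S * (1 - p) ^ (Fintype.card α - S.card) ≤ 1 / 2)
    (hcover : ∀ A ∈ 𝓕, 1 ≤ ∑ S ∈ Finset.univ.filter (fun S => A ⊆ S), lam S) :
    muP p 𝓕 ≤ 1 / 2 := by
  obtain ⟨hp0, hp1⟩ := hp
  have hq : (0:ℝ) ≤ 1 - p := by linarith
  have hmu : ∀ A : Finset α, 0 ≤ p ^ A.card * (1 - p) ^ (Fintype.card α - A.card) :=
    fun A => mul_nonneg (pow_nonneg hp0 _) (pow_nonneg hq _)
  have step1 : muP p 𝓕 ≤ ∑ A ∈ 𝓕, ∑ S ∈ Finset.univ.filter (fun S => A ⊆ S), lam S *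
      (p ^ A.card * (1 - p) ^ (Fintype.card α - A.card)) := by
    refine Finset.sum_le_sum fun A hA => ?_
    rw [← Finset.sum_mul]
    nlinarith [hcover A hA, hmu A]
  have step2 : ∑ A ∈ 𝓕, ∑ S ∈ Finset.univ.filter (fun S => A ⊆ S), lam S *
      (p ^ A.card * (1 - p) ^ (Fintype.card α - A.card))
      ≤ ∑ S : Finset α, lam S * (1 - p) ^ (Fintype.card α - S.card) := by
    have swap : ∑ A ∈ 𝓕, ∑ S ∈ Finset.univ.filter (fun S => A ⊆ S), lam S *
        (p ^ A.card * (1 - p) ^ (Fintype.card α - A.card))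
        = ∑ S : Finset α, ∑ A ∈ 𝓕.filter (fun A => A ⊆ S), lam S *
        (p ^ A.card * (1 - p) ^ (Fintype.card α - A.card)) := by
      rw [Finset.sum_comm' (s := 𝓕) (t := fun A => Finset.univ.filter (fun S => A ⊆ S))
        (t' := Finset.univ) (s' := fun S => 𝓕.filter (fun A => A ⊆ S))]
      intro A S
      simp [and_comm]
    rw [swap]
    refine Finset.sum_le_sum fun S _ => ?_
    rw [← Finset.mul_sum]
    refine mul_le_mul_of_nonneg_left ?_ (hlam S)
    rw [← key_sum p S]
    refine Finset.sum_le_sum_of_subset_of_nonneg ?_ (fun A _ _ => hmu A)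
    intro A hA
    simp only [Finset.mem_filter] at hA
    exact Finset.mem_powerset.mpr hA.2
  linarith
end

section
/- Suppose that for all n ≥ 1 and 0 < p ≤ ε·n^{-1/m_2(F)}: whenever H is a collection of graphs on [n] with Σ_{H∈H} exp(-δ e(H) p) ≤ 1/2, there exists an F-free graph sharing an edge with every H ∈ H (the main technical lemma with constants ε, δ ∈ (0,1/2]). Then the expectation threshold of the down-set F_n of F-free graphs on [n] satisfies q(F_n) ≥ (δε/2)·n^{-1/m_2(F)}. -/
open scoped Classical
open Finset

/-- The 2-density `m₂(F) = max_{J ⊆ F, v_J ≥ 3} (e_J - 1)/(v_J - 2)` of a graph. -/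
noncomputable def m2Dens {V : Type*} [Fintype V] (F : SimpleGraph V) : ℝ :=
  sSup {x : ℝ | ∃ J : F.Subgraph, 3 ≤ J.verts.ncard ∧
    x = ((J.edgeSet.ncard : ℝ) - 1) / ((J.verts.ncard : ℝ) - 2)}

/-- `G` is `F`-free: there is no embedding of `F` into `G` mapping edges to edges. -/
def FFree {V W : Type*} (F : SimpleGraph V) (G : SimpleGraph W) : Prop :=
  ¬ ∃ f : V ↪ W, ∀ a b, F.Adj a b → G.Adj (f a) (f b)

/-- The set of `p ∈ [0,1]` admitting a certificate for the down-set of `F`-free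
graphs on `[n]`: a collection `𝒢` of graphs on `[n]` such that every `F`-free graph is a
subgraph of some member of `𝒢` and `∑_{J ∈ 𝒢} (1-p)^{C(n,2) - e(J)} ≤ 1/2`. -/
noncomputable def certSet {V : Type*} [Fintype V] (F : SimpleGraph V) (n : ℕ) : Set ℝ :=
  {p | p ∈ Set.Icc (0 : ℝ) 1 ∧ ∃ 𝒢 : Finset (SimpleGraph (Fin n)),
    (∀ G : SimpleGraph (Fin n), FFree F G → ∃ J ∈ 𝒢, G ≤ J) ∧
    ∑ J ∈ 𝒢, (1 - p) ^ (n.choose 2 - J.edgeFinset.card) ≤ 1 / 2}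

lemma one_le_m2Dens {V : Type*} [Fintype V] (F : SimpleGraph V)
    (hF : ∃ v, 2 ≤ F.degree v) : 1 ≤ m2Dens F := by
  obtain ⟨v, hv⟩ := hF
  obtain ⟨a, ha, b, hb, hab⟩ := Finset.one_lt_card.mp (lt_of_lt_of_le one_lt_two hv)
  rw [SimpleGraph.mem_neighborFinset] at ha hb
  have hva : v ≠ a := (F.ne_of_adj ha)
  have hvb : v ≠ b := (F.ne_of_adj hb)
  set J : F.Subgraph :=
    { verts := {v, a, b}
      Adj := fun x y => (x = v ∧ y = a) ∨ (x = a ∧ y = v) ∨ (x = v ∧ y = b) ∨ (x = b ∧ y = v)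
      adj_sub := by
        rintro x y (⟨rfl, rfl⟩ | ⟨rfl, rfl⟩ | ⟨rfl, rfl⟩ | ⟨rfl, rfl⟩)
        · exact ha
        · exact ha.symm
        · exact hb
        · exact hb.symm
      edge_vert := by
        rintro x y (⟨rfl, rfl⟩ | ⟨rfl, rfl⟩ | ⟨rfl, rfl⟩ | ⟨rfl, rfl⟩) <;> simp
      symm := by constructor; rintro x y h; tauto } with hJdef
  have hverts : J.verts.ncard = 3 := by
    rw [Set.ncard_eq_three]
    exact ⟨v, a, b, hva, hvb, hab, rfl⟩
  have hedges : J.edgeSet.ncard = 2 := by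
    have : J.edgeSet = {s(v, a), s(v, b)} := by
      ext e
      induction e using Sym2.ind with
      | _ x y =>
        simp only [SimpleGraph.Subgraph.mem_edgeSet, Set.mem_insert_iff,
          Set.mem_singleton_iff, Sym2.eq_iff]
        constructor
        · rintro (⟨rfl, rfl⟩ | ⟨rfl, rfl⟩ | ⟨rfl, rfl⟩ | ⟨rfl, rfl⟩) <;> tauto
        · rintro ((⟨rfl, rfl⟩ | ⟨rfl, rfl⟩) | (⟨rfl, rfl⟩ | ⟨rfl, rfl⟩)) <;> tauto
    rw [this, Set.ncard_pair]
    intro h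
    rw [Sym2.eq_iff] at h
    rcases h with ⟨_, rfl⟩ | ⟨rfl, rfl⟩
    · exact hab rfl
    · exact hab rfl
  have hmem : (1 : ℝ) ∈ {x : ℝ | ∃ J : F.Subgraph, 3 ≤ J.verts.ncard ∧
      x = ((J.edgeSet.ncard : ℝ) - 1) / ((J.verts.ncard : ℝ) - 2)} := by
    refine ⟨J, by rw [hverts], ?_⟩
    rw [hverts, hedges]; norm_num
  have hbdd : BddAbove {x : ℝ | ∃ J : F.Subgraph, 3 ≤ J.verts.ncard ∧
      x = ((J.edgeSet.ncard : ℝ) - 1) / ((J.verts.ncard : ℝ) - 2)} := by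
    refine ⟨(Nat.card (Sym2 V) : ℝ), ?_⟩
    rintro x ⟨K, hK3, rfl⟩
    have hd : (1 : ℝ) ≤ (K.verts.ncard : ℝ) - 2 := by
      have : (3 : ℝ) ≤ (K.verts.ncard : ℝ) := by exact_mod_cast hK3
      linarith
    have he : (K.edgeSet.ncard : ℝ) ≤ (Nat.card (Sym2 V) : ℝ) := by
      have := Set.ncard_le_ncard (Set.subset_univ K.edgeSet) Set.finite_univ
      rw [Set.ncard_univ] at this
      exact_mod_cast this
    have hne : (0:ℝ) ≤ (Nat.card (Sym2 V) : ℝ) := by positivity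
    rcases le_or_gt ((K.edgeSet.ncard : ℝ) - 1) 0 with h | h
    · exact le_trans (div_nonpos_of_nonpos_of_nonneg h (by linarith)) hne
    · calc ((K.edgeSet.ncard : ℝ) - 1) / ((K.verts.ncard : ℝ) - 2)
          ≤ ((K.edgeSet.ncard : ℝ) - 1) := div_le_self h.le hd
        _ ≤ (Nat.card (Sym2 V) : ℝ) := by linarith
  exact le_csSup hbdd hmem

lemma exp_neg_two_le {x : ℝ} (h0 : 0 ≤ x) (h1 : x ≤ 1/2) :
    Real.exp (-(2*x)) ≤ 1 - x := by
  have key : 1 ≤ (1-x) * Real.exp (2*x) := by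
    nlinarith [Real.add_one_le_exp (2*x)]
  have hmul : Real.exp (-(2*x)) * Real.exp (2*x) = 1 := by
    rw [← Real.exp_add]; norm_num
  nlinarith [key, hmul, Real.exp_pos (2*x)]

lemma card_edgeFinset_compl {n : ℕ} (J : SimpleGraph (Fin n)) [Fintype (Jᶜ).edgeSet]
    [Fintype J.edgeSet] :
    (Jᶜ).edgeFinset.card = n.choose 2 - J.edgeFinset.card := by
  have h1 : (Jᶜ).edgeFinset = (⊤ : SimpleGraph (Fin n)).edgeFinset \ J.edgeFinset := by
    ext e
    induction e using Sym2.ind with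
    | _ x y =>
      simp [SimpleGraph.mem_edgeFinset, SimpleGraph.mem_edgeSet, SimpleGraph.compl_adj]
  rw [h1, Finset.card_sdiff_of_subset (SimpleGraph.edgeFinset_mono le_top)]
  congr 1
  rw [SimpleGraph.card_edgeFinset_top_eq_card_choose_two, Fintype.card_fin]

lemma mem_edgeFinset_iff' {W : Type*} {G : SimpleGraph W} {i : Fintype G.edgeSet} {e : Sym2 W} :
    e ∈ @SimpleGraph.edgeFinset _ G i ↔ e ∈ G.edgeSet := by
  letI := i
  exact SimpleGraph.mem_edgeFinset

theorem expectation_threshold_lower_bound {V : Type*} [Fintype V] (F : SimpleGraph V)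
    (hF : ∃ v, 2 ≤ F.degree v) (ε δ : ℝ)
    (hε : ε ∈ Set.Ioc (0 : ℝ) (1 / 2)) (hδ : δ ∈ Set.Ioc (0 : ℝ) (1 / 2))
    (hlemma : ∀ n : ℕ, 1 ≤ n → ∀ p : ℝ, 0 < p → p ≤ ε * (n : ℝ) ^ (-1 / m2Dens F) →
      ∀ 𝓗 : Finset (SimpleGraph (Fin n)),
        (∑ H ∈ 𝓗, Real.exp (-(δ * (H.edgeFinset.card : ℝ) * p))) ≤ 1 / 2 →
        ∃ G : SimpleGraph (Fin n), FFree F G ∧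
          ∀ H ∈ 𝓗, (G.edgeFinset ∩ H.edgeFinset).Nonempty) :
    ∀ n : ℕ, 1 ≤ n → ∀ q : ℝ, IsLeast (certSet F n) q →
      δ * ε / 2 * (n : ℝ) ^ (-1 / m2Dens F) ≤ q := by
  intro n hn q hq
  by_contra hcon
  push_neg at hcon
  set c : ℝ := (n : ℝ) ^ (-1 / m2Dens F) with hc
  have hε0 := hε.1
  have hε1 := hε.2
  have hδ0 := hδ.1
  have hδ1 := hδ.2
  have hm2 : (1:ℝ) ≤ m2Dens F := one_le_m2Dens F hF
  have hn1 : (1:ℝ) ≤ (n : ℝ) := by exact_mod_cast hn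
  have hc1 : c ≤ 1 := by
    apply Real.rpow_le_one_of_one_le_of_nonpos hn1
    apply div_nonpos_of_nonpos_of_nonneg <;> linarith
  have hcpos : 0 < c := Real.rpow_pos_of_pos (by linarith) _
  obtain ⟨⟨⟨hq0, hq1⟩, 𝒢, hcov, hsum⟩, _⟩ := hq
  -- q is small
  have hqhalf : q < 1/2 := by
    have hde : δ * ε ≤ 1/4 := by nlinarith
    have h2 : δ * ε / 2 * c ≤ δ * ε / 2 :=
      mul_le_of_le_one_right (by positivity) hc1
    linarith
  -- the empty graph is F-free, so 𝒢 is nonempty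
  have hbot : FFree F (⊥ : SimpleGraph (Fin n)) := by
    rintro ⟨f, hf⟩
    obtain ⟨v, hv⟩ := hF
    obtain ⟨a, ha⟩ := Finset.card_pos.mp (lt_of_lt_of_le (by norm_num) hv)
    rw [SimpleGraph.mem_neighborFinset] at ha
    exact hf v a ha
  obtain ⟨J0, hJ0, _⟩ := hcov ⊥ hbot
  -- q > 0
  have hqpos : 0 < q := by
    rcases hq0.lt_or_eq with h | h
    · exact h
    · exfalso
      have h1 : (1:ℝ) ≤ ∑ J ∈ 𝒢, (1 - q) ^ (n.choose 2 - J.edgeFinset.card) := by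
        have : ∀ J ∈ 𝒢, (0:ℝ) ≤ (1 - q) ^ (n.choose 2 - J.edgeFinset.card) := by
          intro J _; rw [← h]; norm_num
        have := Finset.single_le_sum this hJ0
        rw [← h] at this ⊢
        simpa using this
      linarith
  set p : ℝ := 2 * q / δ with hp
  have hp0 : 0 < p := by positivity
  have hppε : p ≤ ε * c := by
    rw [hp, div_le_iff₀ hδ0]
    nlinarith
  have hδp : δ * p = 2 * q := by rw [hp]; field_simp [hδ0.ne']
  have hexp : Real.exp (-(δ * p)) ≤ 1 - q := by
    rw [hδp]
    have := exp_neg_two_le hq0 hqhalf.le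
    convert this using 2 <;> ring
  -- sum bound for complements
  have hsum2 : ∑ H ∈ 𝒢.image compl, Real.exp (-(δ * (H.edgeFinset.card : ℝ) * p)) ≤ 1/2 := by
    rw [Finset.sum_image (fun x _ y _ h => compl_injective h)]
    refine le_trans (Finset.sum_le_sum ?_) hsum
    intro J _
    have key : Real.exp (-(δ * (((Jᶜ).edgeFinset.card : ℕ) : ℝ) * p)) ≤
        (1 - q) ^ (n.choose 2 - J.edgeFinset.card) := by
      rw [card_edgeFinset_compl J]
      set m := n.choose 2 - J.edgeFinset.card with hm
      have h1 : -(δ * (m:ℝ) * p) = (m:ℝ) * (-(δ * p)) := by ring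
      rw [h1, Real.exp_nat_mul]
      exact pow_le_pow_left₀ (Real.exp_nonneg _) hexp m
    convert key using 6 <;> congr! <;> exact Subsingleton.elim _ _
  obtain ⟨G, hGfree, hGint⟩ := hlemma n hn p hp0 hppε (𝒢.image compl) hsum2
  obtain ⟨J, hJ, hGJ⟩ := hcov G hGfree
  obtain ⟨e, he⟩ := hGint Jᶜ (Finset.mem_image_of_mem _ hJ)
  rw [Finset.mem_inter] at he
  have h1 : e ∈ J.edgeSet := SimpleGraph.edgeSet_mono hGJ (mem_edgeFinset_iff'.mp he.1)
  have h2 : e ∈ (Jᶜ).edgeSet := mem_edgeFinset_iff'.mp he.2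
  induction e using Sym2.ind with
  | _ x y =>
    rw [SimpleGraph.mem_edgeSet] at h1 h2
    exact h2.2 h1
end
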